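/- Let R be a G-graded ring. The girth of the intersection graph of graded left ideals Gr_G(R) is either 3 or infinite (Gr_G(R) has no cycles). -/

import Mathlib

variable {G R : Type*} [AddGroup G] [DecidableEq G] [Ring R]

/-- The set of proper nontrivial `G`-graded left ideals of `R`. -/
def hV (𝒜 : G → AddSubgroup R) [GradedRing 𝒜] : Set (Ideal R) :=
  {I | I ≠ ⊥ ∧ I ≠ ⊤ ∧ Ideal.IsHomogeneous 𝒜 I}

/-- The intersection graph on a set of (left) ideals: two distinct ideals are
adjacent iff their intersection is nonzero. -/
def interGraph (V : Set (Ideal R)) : SimpleGraph V where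
  Adj I J := I ≠ J ∧ (I : Ideal R) ⊓ (J : Ideal R) ≠ ⊥
  symm := ⟨fun I J ⟨h1, h2⟩ => ⟨h1.symm, by rwa [inf_comm] at h2⟩⟩
  loopless := ⟨fun I ⟨h1, _⟩ => h1 rfl⟩

open SimpleGraph Walk in
/-- Any cycle in the intersection graph of graded ideals yields a triangle. -/
lemma exists_triangle (𝒜 : G → AddSubgroup R) [GradedRing 𝒜]
    {v : ↥(hV 𝒜)} {p : (interGraph (hV 𝒜)).Walk v v} (hp : p.IsCycle) :
    ∃ a b c : ↥(hV 𝒜), (interGraph (hV 𝒜)).Adj a b ∧ (interGraph (hV 𝒜)).Adj a c ∧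
      (interGraph (hV 𝒜)).Adj b c := by
  have h3 := hp.three_le_length
  -- decompose the first two edges
  obtain ⟨b, h₁, q₁, rfl⟩ : ∃ b, ∃ h : (interGraph (hV 𝒜)).Adj v b, ∃ q : (interGraph (hV 𝒜)).Walk b v, p = Walk.cons h q := by
    cases p with
    | nil => simp at h3
    | cons h q => exact ⟨_, h, q, rfl⟩
  obtain ⟨c, h₂, q₂, rfl⟩ : ∃ c, ∃ h : (interGraph (hV 𝒜)).Adj b c, ∃ q : (interGraph (hV 𝒜)).Walk c v, q₁ = Walk.cons h q := by
    cases q₁ with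
    | nil => simp at h3
    | cons h q => exact ⟨_, h, q, rfl⟩
  have hq₂ : ¬ q₂.Nil := by
    rw [not_nil_iff_lt_length]
    simp only [length_cons] at h3
    omega
  have hnd : (b :: q₂.support).Nodup := by
    have := hp.support_nodup
    simpa using this
  have hb : b ∉ q₂.support := (List.nodup_cons.1 hnd).1
  have hq₂nd : q₂.support.Nodup := (List.nodup_cons.1 hnd).2
  -- the third vertex differs from the first
  have hcv : c ≠ v := by
    rintro rfl
    obtain ⟨x, hx, q₃, rfl⟩ := not_nil_iff.1 hq₂
    have : c ∈ q₃.support := q₃.end_mem_support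
    simp only [support_cons, List.nodup_cons] at hq₂nd
    exact hq₂nd.1 this
  -- the last edge
  obtain ⟨d, h₃, q₃, hrev⟩ : ∃ d, ∃ h : (interGraph (hV 𝒜)).Adj v d, ∃ q : (interGraph (hV 𝒜)).Walk d c,
      q₂.reverse = Walk.cons h q := by
    have : ¬ q₂.reverse.Nil := by
      rw [not_nil_iff_lt_length, length_reverse]
      rwa [not_nil_iff_lt_length] at hq₂
    exact not_nil_iff.1 this
  have hd : d ∈ q₂.support := by
    have : d ∈ q₂.reverse.support := by rw [hrev]; simp [q₃.start_mem_support]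
    rwa [support_reverse, List.mem_reverse] at this
  have hbd : b ≠ d := fun h => hb (h ▸ hd)
  have hdv : (interGraph (hV 𝒜)).Adj d v := h₃.symm
  -- now the ideal-theoretic case analysis
  obtain ⟨hvb, hvb0⟩ := h₁
  by_cases hIJ : (v : Ideal R) ⊓ (b : Ideal R) = (v : Ideal R) ∨
      (v : Ideal R) ⊓ (b : Ideal R) = (b : Ideal R)
  · rcases hIJ with hIJ | hIJ
    · -- v ≤ b : triangle v, d, b
      refine ⟨v, d, b, hdv.symm, ⟨hvb, hvb0⟩, ⟨hbd.symm, fun h => hdv.2 ?_⟩⟩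
      have hle : (v : Ideal R) ≤ (b : Ideal R) := by
        rw [← hIJ]; exact inf_le_right
      have : (d : Ideal R) ⊓ (v : Ideal R) ≤ (d : Ideal R) ⊓ (b : Ideal R) :=
        inf_le_inf_left _ hle
      rw [h] at this
      exact le_bot_iff.1 this
    · -- b ≤ v : triangle v, b, c
      refine ⟨v, b, c, ⟨hvb, hvb0⟩, ⟨hcv.symm, fun h => h₂.2 ?_⟩, h₂⟩
      have hle : (b : Ideal R) ≤ (v : Ideal R) := by
        rw [← hIJ]; exact inf_le_left
      have : (b : Ideal R) ⊓ (c : Ideal R) ≤ (v : Ideal R) ⊓ (c : Ideal R) :=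
        inf_le_inf_right _ hle
      rw [h] at this
      exact le_bot_iff.1 this
  · push_neg at hIJ
    -- K := v ⊓ b is a third vertex
    have hKmem : (v : Ideal R) ⊓ (b : Ideal R) ∈ hV 𝒜 := by
      refine ⟨hvb0, fun h => v.2.2.1 (top_le_iff.1 ?_), v.2.2.2.inf b.2.2.2⟩
      rw [← h]; exact inf_le_left
    refine ⟨v, b, ⟨_, hKmem⟩, ⟨hvb, hvb0⟩, ⟨fun h => hIJ.1 (congrArg Subtype.val h).symm, ?_⟩,
      ⟨fun h => hIJ.2 (congrArg Subtype.val h).symm, ?_⟩⟩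
    · show (v : Ideal R) ⊓ ((v : Ideal R) ⊓ (b : Ideal R)) ≠ ⊥
      rwa [inf_left_idem]
    · show (b : Ideal R) ⊓ ((v : Ideal R) ⊓ (b : Ideal R)) ≠ ⊥
      rwa [inf_eq_right.2 inf_le_right]

/-- The girth of the intersection graph of graded left ideals is
either 3 or infinite (no cycles). -/
theorem stmt9 (𝒜 : G → AddSubgroup R) [GradedRing 𝒜] :
    (interGraph (hV 𝒜)).egirth = 3 ∨ (interGraph (hV 𝒜)).egirth = ⊤ := by
  classical
  by_cases hac : (interGraph (hV 𝒜)).IsAcyclic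
  · exact Or.inr hac.egirth_eq_top
  · left
    refine le_antisymm ?_ SimpleGraph.three_le_egirth
    simp only [SimpleGraph.IsAcyclic, not_forall, not_not] at hac
    obtain ⟨v, p, hp⟩ := hac
    obtain ⟨a, b, c, hab, hac', hbc⟩ := exists_triangle 𝒜 hp
    obtain ⟨u, w, hw, hw3⟩ := SimpleGraph.is3Clique_iff_exists_cycle_length_three.1
      ⟨{a, b, c}, SimpleGraph.is3Clique_iff.2 ⟨a, b, c, hab, hac', hbc, rfl⟩⟩
    calc (interGraph (hV 𝒜)).egirth ≤ (w.length : ℕ∞) :=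
          SimpleGraph.le_egirth.1 le_rfl u w hw
      _ = 3 := by rw [hw3]; rfl
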